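/- Makarov upper bound: for any two real-valued random variables Y1, Y0 on a common probability space and any t ∈ ℝ, P(Y1 - Y0 ≤ 0) ≤ 1 + P(Y1 ≤ t) - P(Y0 < t). In particular P(Y1 - Y0 ≤ 0) ≤ 1 + inf_t (F1(t) - F0(t)) when F0 is continuous. -/

import Mathlib

open MeasureTheory

theorem makarov_upper_bound
    {Ω : Type*} [MeasurableSpace Ω] (P : Measure Ω) [IsProbabilityMeasure P]
    (Y1 Y0 : Ω → ℝ) (hY1 : Measurable Y1) (hY0 : Measurable Y0) :
    (∀ t : ℝ,
      (P {ω | Y1 ω - Y0 ω ≤ 0}).toReal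
        ≤ 1 + (P {ω | Y1 ω ≤ t}).toReal - (P {ω | Y0 ω < t}).toReal) ∧
    ((Continuous fun t : ℝ => (P {ω | Y0 ω ≤ t}).toReal) →
      (P {ω | Y1 ω - Y0 ω ≤ 0}).toReal
        ≤ 1 + ⨅ t : ℝ, ((P {ω | Y1 ω ≤ t}).toReal - (P {ω | Y0 ω ≤ t}).toReal)) := by
  have key : ∀ t : ℝ,
      (P {ω | Y1 ω - Y0 ω ≤ 0}).toReal
        ≤ 1 + (P {ω | Y1 ω ≤ t}).toReal - (P {ω | Y0 ω < t}).toReal := by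
    intro t
    have hC : MeasurableSet {ω | Y0 ω < t} := hY0 measurableSet_Iio
    have hsub : {ω | Y1 ω - Y0 ω ≤ 0} ⊆ {ω | Y1 ω ≤ t} ∪ {ω | Y0 ω < t}ᶜ := by
      intro ω hω
      simp only [Set.mem_setOf_eq, sub_nonpos] at hω
      by_cases h : Y1 ω ≤ t
      · exact Or.inl h
      · refine Or.inr ?_
        simp only [Set.mem_compl_iff, Set.mem_setOf_eq, not_lt]
        exact le_trans (le_of_not_ge h) hω
    have h1 : P {ω | Y1 ω - Y0 ω ≤ 0} ≤ P {ω | Y1 ω ≤ t} + P {ω | Y0 ω < t}ᶜ :=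
      le_trans (measure_mono hsub) (measure_union_le _ _)
    have h2 : (P {ω | Y1 ω - Y0 ω ≤ 0}).toReal
        ≤ (P {ω | Y1 ω ≤ t}).toReal + (P {ω | Y0 ω < t}ᶜ).toReal := by
      rw [← ENNReal.toReal_add (measure_ne_top _ _) (measure_ne_top _ _)]
      exact ENNReal.toReal_mono (by finiteness) h1
    have h3 : (P {ω | Y0 ω < t}ᶜ).toReal = 1 - (P {ω | Y0 ω < t}).toReal := by
      rw [measure_compl hC (measure_ne_top _ _), measure_univ,
        ENNReal.toReal_sub_of_le prob_le_one ENNReal.one_ne_top, ENNReal.toReal_one]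
    linarith [h2, h3]
  refine ⟨key, fun hcont => ?_⟩
  have hbd : ∀ t : ℝ, (P {ω | Y1 ω - Y0 ω ≤ 0}).toReal - 1
      ≤ (P {ω | Y1 ω ≤ t}).toReal - (P {ω | Y0 ω ≤ t}).toReal := by
    intro t
    have hF : (P {ω | Y0 ω ≤ t}).toReal ≤ (P {ω | Y0 ω < t}).toReal := by
      have htend : Filter.Tendsto (fun n : ℕ => (P {ω | Y0 ω ≤ t - 1/(n+1)}).toReal)
          Filter.atTop (nhds ((P {ω | Y0 ω ≤ t}).toReal)) := by
        have h1 : Filter.Tendsto (fun n : ℕ => t - 1/(n+1 : ℝ)) Filter.atTop (nhds t) := by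
          have := tendsto_one_div_add_atTop_nhds_zero_nat (𝕜 := ℝ)
          have := (tendsto_const_nhds (x := t) (f := Filter.atTop)).sub this
          simpa using this
        exact (hcont.tendsto t).comp h1
      refine le_of_tendsto htend (Filter.Eventually.of_forall fun n => ?_)
      refine ENNReal.toReal_mono (measure_ne_top _ _) (measure_mono ?_)
      intro ω hω
      simp only [Set.mem_setOf_eq] at hω ⊢
      have : (0:ℝ) < 1/(n+1) := by positivity
      linarith
    linarith [key t, hF]
  have := le_ciInf hbd
  linarith [this]
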